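/- Let N ≥ 1 be an integer, 0 < α < 2/N, b > 0, K ≥ 1, M > 0 and σ > 0. Let 0 < T < 1/b and let t' ∈ (0, 1/b) be defined by (1−bt')^{(2−Nα)/2} = 1/2. Suppose g : [0,T) → [0,∞) is measurable and satisfies g(s) ≤ (4K)^α for all s ∈ [0,T), and g(s) ≤ (b(2−Nα)/(2αM)) · (1−bs)^{(2−Nα)/2}/(1 − (1−bs)^{(2−Nα)/2}) for all s ∈ [t', T). Then for every 0 ≤ t < T: ∫₀ᵗ (1−bs)^{−(4−Nα)/2 − σ} g(s) ds ≤ (2(4K)^α/(bσ) + (2−Nα)/(σαM)) (1−bt)^{−σ}. -/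

import Mathlib

open MeasureTheory Filter Complex
open scoped FourierTransform ENNReal Topology Real

noncomputable section

/-- Euclidean space `ℝ^N`. -/
abbrev Eu (N : ℕ) := EuclideanSpace ℝ (Fin N)

/-- The Japanese bracket `⟨x⟩ = (1+|x|²)^{1/2}`. -/
def jap {N : ℕ} (x : Eu N) : ℝ := (1 + ‖x‖ ^ 2) ^ ((1 : ℝ) / 2)

/-- `D^β u` for a multi-index `β` with `|β| = i`, encoded by the list `σ` of coordinate
directions (each coordinate `j` occurring `β j` times). -/
def Dd {N : ℕ} (i : ℕ) (σ : Fin i → Fin N) (u : Eu N → ℂ) (x : Eu N) : ℂ :=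
  iteratedFDeriv ℝ i u x fun j => EuclideanSpace.single (σ j) 1

/-- The Laplacian `Δu = Σᵢ ∂²u/∂xᵢ²`. -/
def lap {N : ℕ} (u : Eu N → ℂ) (x : Eu N) : ℂ :=
  ∑ i : Fin N, iteratedFDeriv ℝ 2 u x fun _ => EuclideanSpace.single i 1

/-- First-order partial derivative `∂u/∂xᵢ`. -/
def pd {N : ℕ} (i : Fin N) (u : Eu N → ℂ) : Eu N → ℂ := fun x =>
  fderiv ℝ u x (EuclideanSpace.single i 1)

/-- The weighted function `⟨x⟩^a f`. -/
def wt {N : ℕ} (a : ℕ) (f : Eu N → ℂ) : Eu N → ℂ := fun x => (jap x ^ a : ℝ) * f x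

/-- `‖⟨x⟩^a f‖_{L^p}` (real-valued). -/
def wnorm {N : ℕ} (a : ℕ) (p : ℝ≥0∞) (f : Eu N → ℂ) : ℝ :=
  (eLpNorm (wt a f) p volume).toReal

/-- Membership in the space `X` (with `J = 2m+2+k+n`): `u ∈ H^J(ℝ^N)` together with the
weighted `L^∞` and `L²` conditions on the derivatives `D^β u`. -/
def MemX (N k n m : ℕ) (u : Eu N → ℂ) : Prop :=
  ContDiff ℝ (2*m+2+k+n) u ∧
  (∀ i ≤ 2*m+2+k+n, ∀ σ : Fin i → Fin N, MemLp (Dd i σ u) 2 volume) ∧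
  (∀ i ≤ 2*m, ∀ σ : Fin i → Fin N, MemLp (wt n (Dd i σ u)) ⊤ volume) ∧
  (∀ i, 2*m+1 ≤ i → i ≤ 2*m+2+k → ∀ σ : Fin i → Fin N,
    MemLp (wt n (Dd i σ u)) 2 volume) ∧
  (∀ i, 2*m+2+k < i → i ≤ 2*m+2+k+n → ∀ σ : Fin i → Fin N,
    MemLp (wt (2*m+2+k+n - i) (Dd i σ u)) 2 volume)

/-- The norm of the space `X`. -/
def normX (N k n m : ℕ) (u : Eu N → ℂ) : ℝ :=
  (∑ i ∈ Finset.range (2*m+1), ⨆ σ : Fin i → Fin N, wnorm n ⊤ (Dd i σ u)) +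
  ∑ p ∈ Finset.range (k+2), ∑ q ∈ Finset.range (n+1),
    ⨆ σ : Fin (p+q+2*m+1) → Fin N, wnorm (n - q) 2 (Dd (p+q+2*m+1) σ u)

/-- `inf_{x ∈ ℝ^N} ⟨x⟩^n |u(x)|`. -/
def infv {N : ℕ} (n : ℕ) (u : Eu N → ℂ) : ℝ := ⨅ x : Eu N, jap x ^ n * ‖u x‖

/-- The free Schrödinger group `e^{itΔ}`, defined on the Fourier side as multiplication by
`e^{-4π²it|ξ|²}` (with Mathlib's `2π`-convention for the Fourier transform this is the
unitary group generated by `iΔ`). -/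
def schr (N : ℕ) (t : ℝ) (f : Eu N → ℂ) : Eu N → ℂ :=
  𝓕⁻ fun ξ : Eu N => Complex.exp (Complex.I * Complex.ofReal (-(4 * π ^ 2 * t * ‖ξ‖ ^ 2))) * 𝓕 f ξ

/-- The seminorm `‖u‖_{1,ℓ} = sup_{|β| ≤ ℓ} ‖⟨x⟩^n D^β u‖_{L^∞}`. -/
def snorm1 (N n : ℕ) (ℓ : ℕ) (u : Eu N → ℂ) : ℝ :=
  ⨆ i : Fin (ℓ+1), ⨆ σ : Fin (i : ℕ) → Fin N, wnorm n ⊤ (Dd i σ u)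

/-- The seminorm `‖u‖_{2,ℓ} = sup_{2m+1 ≤ |β| ≤ ℓ} ‖⟨x⟩^n D^β u‖_{L²}` (zero if `ℓ ≤ 2m`). -/
def snorm2 (N n m : ℕ) (ℓ : ℕ) (u : Eu N → ℂ) : ℝ :=
  ⨆ i : Fin (ℓ+1), ⨆ σ : Fin (i : ℕ) → Fin N,
    if 2*m+1 ≤ (i : ℕ) then wnorm n 2 (Dd i σ u) else 0

/-- The seminorm `‖u‖_{3,ℓ} = sup_{2m+3+k ≤ |β| ≤ ℓ} ‖⟨x⟩^{J-ℓ} D^β u‖_{L²}`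
(zero if `ℓ ≤ 2m+2+k`), where `J = 2m+2+k+n`. -/
def snorm3 (N k n m : ℕ) (ℓ : ℕ) (u : Eu N → ℂ) : ℝ :=
  ⨆ i : Fin (ℓ+1), ⨆ σ : Fin (i : ℕ) → Fin N,
    if 2*m+3+k ≤ (i : ℕ) then wnorm (2*m+2+k+n - ℓ) 2 (Dd i σ u) else 0

/-- The exponent `σ₁ = 1/(4[4J(J-2m-1) + 4J + 4/N + 1](8m+1)^{2m})`
(note `J - 2m - 1 = k+n+1`). -/
def sigma1 (N k n m : ℕ) : ℝ :=
  1 / (4 * (4*((2*m+2+k+n : ℕ) : ℝ)*((k : ℝ)+n+1) + 4*((2*m+2+k+n : ℕ) : ℝ) + 4/(N : ℝ) + 1)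
      * (8*(m : ℝ)+1) ^ (2*m))

/-- The exponents `σ_j`, `0 ≤ j ≤ J`. -/
def sigmaJ (N k n m : ℕ) (α : ℝ) (j : ℕ) : ℝ :=
  if j = 0 then 0
  else if j = 1 then sigma1 N k n m
  else if j ≤ 2*m then (8*(m : ℝ)+1) ^ j * sigma1 N k n m
  else
    (if j = 2*m+1 then (0 : ℝ) else
      4*((2*m+2+k+n : ℕ) : ℝ) * ((8*(m : ℝ)+1) ^ (2*m) * sigma1 N k n m) * ((j : ℝ) - (2*m+1)))
    + ((2 - N*α)/2 + (4*((2*m+2+k+n : ℕ) : ℝ) + 2*α + 1)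
        * ((8*(m : ℝ)+1) ^ (2*m) * sigma1 N k n m))

/-- Duhamel formulation of `∂ₜu = iΔu + λ|u|^α u`, `u(0) = u₀`, on `[0,∞)`. -/
def IsDuhamelNLS (N : ℕ) (α : ℝ) (Λ : ℂ) (u0 : Eu N → ℂ) (u : ℝ → Eu N → ℂ) : Prop :=
  u 0 = u0 ∧ ∀ t, 0 ≤ t → ∀ x, u t x = schr N t u0 x +
    Λ * ∫ s in (0:ℝ)..t,
      schr N (t - s) (fun y => Complex.ofReal (‖u s y‖ ^ α) * u s y) x

/-- `u ∈ C([0,∞), H¹(ℝ^N))`. -/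
def ContH1 (N : ℕ) (u : ℝ → Eu N → ℂ) : Prop :=
  (∀ t, 0 ≤ t → MemLp (u t) 2 volume ∧ ∀ i : Fin N, MemLp (pd i (u t)) 2 volume) ∧
  ∀ t₀, 0 ≤ t₀ → Tendsto
    (fun t => eLpNorm (u t - u t₀) 2 volume
      + ∑ i : Fin N, eLpNorm (pd i (u t) - pd i (u t₀)) 2 volume)
    (𝓝[Set.Ici 0] t₀) (𝓝 0)

/-- Duhamel formulation of `∂ₜv = iΔv + λ(1-bt)^{-(4-Nα)/2}|v|^α v`, `v(0) = v₀`,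
on `[0,T]` (the equation (NLS_b)). -/
def IsDuhamelNLSb (N : ℕ) (α : ℝ) (Λ : ℂ) (b : ℝ) (v0 : Eu N → ℂ) (T : ℝ)
    (v : ℝ → Eu N → ℂ) : Prop :=
  v 0 = v0 ∧ ∀ t ∈ Set.Icc (0:ℝ) T, ∀ x, v t x = schr N t v0 x +
    Λ * ∫ s in (0:ℝ)..t, Complex.ofReal ((1 - b*s) ^ (-(4 - (N : ℝ)*α)/2)) *
      schr N (t - s) (fun y => Complex.ofReal (‖v s y‖ ^ α) * v s y) x

/-- `v ∈ C(s, X)`. -/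
def ContXOn (N k n m : ℕ) (s : Set ℝ) (v : ℝ → Eu N → ℂ) : Prop :=
  (∀ t ∈ s, MemX N k n m (v t)) ∧
  ∀ t₀ ∈ s, Tendsto (fun t => normX N k n m (v t - v t₀)) (𝓝[s] t₀) (𝓝 0)

/-- `v ∈ C([0,T], X)` is a solution of (NLS_b) on `[0,T]`. -/
def IsSolXOn (N k n m : ℕ) (α : ℝ) (Λ : ℂ) (b : ℝ) (v0 : Eu N → ℂ) (T : ℝ)
    (v : ℝ → Eu N → ℂ) : Prop :=
  ContXOn N k n m (Set.Icc 0 T) v ∧ IsDuhamelNLSb N α Λ b v0 T v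

/-- `inf_{0≤t≤T} inf_{x∈ℝ^N} ⟨x⟩^n |v(t,x)| > 0`. -/
def PosInfOn (N n : ℕ) (T : ℝ) (v : ℝ → Eu N → ℂ) : Prop :=
  ∃ ε > (0:ℝ), ∀ t ∈ Set.Icc (0:ℝ) T, ε ≤ infv n (v t)

/-- `v` is the maximal solution of (NLS_b), defined on `[0, Tmax)` with `Tmax ≤ 1/b`,
satisfying the non-vanishing condition on every compact subinterval, and blowing up
at `Tmax` if `Tmax < 1/b`. -/
def IsMaxSol (N k n m : ℕ) (α : ℝ) (Λ : ℂ) (b : ℝ) (v0 : Eu N → ℂ) (Tmax : ℝ)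
    (v : ℝ → Eu N → ℂ) : Prop :=
  0 < Tmax ∧ Tmax ≤ 1/b ∧
  (∀ T, 0 < T → T < Tmax → IsSolXOn N k n m α Λ b v0 T v ∧ PosInfOn N n T v) ∧
  (Tmax < 1/b →
    Tendsto (fun t => normX N k n m (v t) + (infv n (v t))⁻¹) (𝓝[Set.Iio Tmax] Tmax) atTop)

/-- `Ψ_T ≤ C`, i.e. `Φ_{1,T} ≤ C`, `Φ_{2,T} ≤ C`, `Φ_{3,T} ≤ C` and `Φ_{4,T} ≤ C`
(with `Φ_{4,T} ≤ C` written as `(1-bt)^{σ₁} ≤ C · inf_x ⟨x⟩^n |v(t,x)|`). -/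
def PsiLe (N k n m : ℕ) (α b : ℝ) (v : ℝ → Eu N → ℂ) (T C : ℝ) : Prop :=
  ∀ t ∈ Set.Icc (0:ℝ) T,
    (∀ j ≤ 2*m, (1 - b*t) ^ (sigmaJ N k n m α j) * snorm1 N n j (v t) ≤ C) ∧
    (∀ j, 2*m+1 ≤ j → j ≤ 2*m+2+k →
      (1 - b*t) ^ (sigmaJ N k n m α j) * snorm2 N n m j (v t) ≤ C) ∧
    (∀ j, 2*m+3+k ≤ j → j ≤ 2*m+2+k+n →
      (1 - b*t) ^ (sigmaJ N k n m α j) * snorm3 N k n m j (v t) ≤ C) ∧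
    (1 - b*t) ^ (sigmaJ N k n m α 1) ≤ C * infv n (v t)

end
set_option maxHeartbeats 1000000 in
/-- **Estimate (3.18)**: the key integral estimate
`∫₀ᵗ (1-bs)^{-(4-Nα)/2-σ} g(s) ds ≤ (2(4K)^α/(bσ) + (2-Nα)/(σαM)) (1-bt)^{-σ}` for a
function `g` bounded by `(4K)^α` and decaying like
`(b(2-Nα)/(2αM)) (1-bs)^{(2-Nα)/2}/(1-(1-bs)^{(2-Nα)/2})` past `t'`. -/
theorem key_integral_estimate
    (N : ℕ) (hN : 1 ≤ N) (α b K M σ T t' : ℝ)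
    (hα0 : 0 < α) (hα : α < 2/(N : ℝ)) (hb : 0 < b) (hK : 1 ≤ K) (hM : 0 < M)
    (hσ : 0 < σ) (hT0 : 0 < T) (hT : T < 1/b)
    (ht'0 : 0 < t') (ht'1 : t' < 1/b) (ht' : (1 - b*t') ^ ((2-(N : ℝ)*α)/2) = 1/2)
    (g : ℝ → ℝ) (hgm : Measurable g) (hg0 : ∀ s, 0 ≤ s → s < T → 0 ≤ g s)
    (hg1 : ∀ s, 0 ≤ s → s < T → g s ≤ (4*K) ^ α)
    (hg2 : ∀ s, t' ≤ s → s < T →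
      g s ≤ b*(2-(N : ℝ)*α)/(2*α*M)
              * ((1-b*s) ^ ((2-(N : ℝ)*α)/2) / (1 - (1-b*s) ^ ((2-(N : ℝ)*α)/2)))) :
    ∀ t : ℝ, 0 ≤ t → t < T →
      ∫ s in (0:ℝ)..t, (1-b*s) ^ (-(4-(N : ℝ)*α)/2 - σ) * g s
        ≤ (2*(4*K) ^ α/(b*σ) + (2-(N : ℝ)*α)/(σ*α*M)) * (1-b*t) ^ (-σ) := by
  have hNpos : (0:ℝ) < (N:ℝ) := by exact_mod_cast Nat.pos_of_ne_zero (by omega)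
  have hNα : (N:ℝ)*α < 2 := by
    have := (lt_div_iff₀ hNpos).mp hα
    linarith
  set c : ℝ := b*(2-(N:ℝ)*α)/(2*α*M) with hcdef
  have hc : 0 < c := div_pos (by nlinarith) (by positivity)
  set C₀ : ℝ := 2*(4*K)^α + 2*c with hC₀
  clear_value C₀
  clear_value c
  have h4K : (0:ℝ) ≤ (4*K)^α := Real.rpow_nonneg (by linarith) α
  have hC₀pos : 0 < C₀ := by rw [hC₀]; nlinarith
  have hrt' : 0 < 1 - b*t' := by
    have := (lt_div_iff₀ hb).mp ht'1; linarith
  intro t ht0 htT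
  have htb : b*t < 1 := by
    have := (lt_div_iff₀ hb).mp (htT.trans hT); linarith
  have hrt : 0 < 1 - b*t := by linarith
  have hr : ∀ s ∈ Set.Icc (0:ℝ) t, 0 < 1 - b*s := by
    intro s hs
    have : b*s ≤ b*t := mul_le_mul_of_nonneg_left hs.2 hb.le
    linarith
  -- pointwise bound
  have hkey : ∀ s ∈ Set.Icc (0:ℝ) t,
      (1-b*s) ^ (-(4-(N:ℝ)*α)/2 - σ) * g s ≤ C₀ * (1-b*s) ^ (-1-σ) := by
    intro s hs
    have hrs := hr s hs
    have hsT : s < T := lt_of_le_of_lt hs.2 htT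
    have hA : (0:ℝ) ≤ (1-b*s) ^ (-1-σ) := Real.rpow_nonneg hrs.le _
    have hG0 : 0 ≤ g s := hg0 s hs.1 hsT
    have hexp : -(4-(N:ℝ)*α)/2 - σ = (-1-σ) + (-((2-(N:ℝ)*α)/2)) := by ring
    rw [hexp, Real.rpow_add hrs]
    set β : ℝ := (2-(N:ℝ)*α)/2 with hβ
    clear_value β
    have hβ0 : 0 < β := by rw [hβ]; linarith
    have hX0 : 0 ≤ (1-b*s)^(-β) := Real.rpow_nonneg hrs.le _
    rcases le_or_gt s t' with hst' | hst'
    · have hmono : (1-b*t')^β ≤ (1-b*s)^β := by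
        apply Real.rpow_le_rpow hrt'.le _ hβ0.le
        nlinarith
      rw [ht'] at hmono
      have hX : (1-b*s)^(-β) ≤ 2 := by
        rw [Real.rpow_neg hrs.le]
        calc ((1-b*s)^β)⁻¹ ≤ ((1:ℝ)/2)⁻¹ := inv_anti₀ (by norm_num) hmono
          _ = 2 := by norm_num
      have hG : g s ≤ (4*K)^α := hg1 s hs.1 hsT
      have hAX : 0 ≤ (1-b*s)^(-1-σ) * (1-b*s)^(-β) := mul_nonneg hA hX0
      calc (1-b*s)^(-1-σ) * (1-b*s)^(-β) * g s
          ≤ (1-b*s)^(-1-σ) * (1-b*s)^(-β) * (4*K)^α :=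
            mul_le_mul_of_nonneg_left hG hAX
        _ ≤ (1-b*s)^(-1-σ) * 2 * (4*K)^α := by
            have h1 : 0 ≤ (1-b*s)^(-1-σ) * (4*K)^α := mul_nonneg hA h4K
            nlinarith [h1]
        _ ≤ C₀ * (1-b*s)^(-1-σ) := by
            have h2 : 0 ≤ (1-b*s)^(-1-σ) * c := mul_nonneg hA hc.le
            rw [hC₀]; nlinarith [h2]
    · have hmono : (1-b*s)^β ≤ (1-b*t')^β := by
        apply Real.rpow_le_rpow hrs.le _ hβ0.le
        nlinarith
      rw [ht'] at hmono
      have hden : (1:ℝ)/2 ≤ 1 - (1-b*s)^β := by linarith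
      have hrβ0 : 0 ≤ (1-b*s)^β := Real.rpow_nonneg hrs.le _
      have hdiv : (1-b*s)^β / (1 - (1-b*s)^β) ≤ 2 * (1-b*s)^β := by
        calc (1-b*s)^β / (1 - (1-b*s)^β) ≤ (1-b*s)^β / (1/2) :=
              div_le_div_of_nonneg_left hrβ0 (by norm_num) hden
          _ = 2 * (1-b*s)^β := by ring
      have hg2' : g s ≤ 2*c*(1-b*s)^β := by
        calc g s ≤ c * ((1-b*s)^β / (1 - (1-b*s)^β)) := hg2 s hst'.le hsT
          _ ≤ c * (2*(1-b*s)^β) := mul_le_mul_of_nonneg_left hdiv hc.le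
          _ = 2*c*(1-b*s)^β := by ring
      have hone : (1-b*s)^(-β) * (1-b*s)^β = 1 := by
        rw [← Real.rpow_add hrs]; simp
      calc (1-b*s)^(-1-σ) * (1-b*s)^(-β) * g s
          ≤ (1-b*s)^(-1-σ) * (1-b*s)^(-β) * (2*c*(1-b*s)^β) :=
            mul_le_mul_of_nonneg_left hg2' (mul_nonneg hA hX0)
        _ = 2*c*(1-b*s)^(-1-σ) * ((1-b*s)^(-β) * (1-b*s)^β) := by ring
        _ = 2*c*(1-b*s)^(-1-σ) := by rw [hone, mul_one]
        _ ≤ C₀ * (1-b*s)^(-1-σ) := by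
            have h2 : 0 ≤ (1-b*s)^(-1-σ) * (4*K)^α := mul_nonneg hA h4K
            rw [hC₀]; nlinarith [h2]
  -- integrability of the bound
  have hcontB : ContinuousOn (fun s : ℝ => C₀ * (1-b*s)^(-1-σ)) (Set.Icc 0 t) := by
    apply continuousOn_const.mul
    apply ContinuousOn.rpow_const
    · exact (continuousOn_const.sub ((continuous_const.mul continuous_id).continuousOn))
    · intro s hs; exact Or.inl (hr s hs).ne'
  have hBint : IntervalIntegrable (fun s : ℝ => C₀ * (1-b*s)^(-1-σ)) volume 0 t :=
    hcontB.intervalIntegrable_of_Icc ht0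
  -- integrability of the integrand
  have hfint : IntervalIntegrable
      (fun s : ℝ => (1-b*s) ^ (-(4-(N:ℝ)*α)/2 - σ) * g s) volume 0 t := by
    rw [intervalIntegrable_iff_integrableOn_Ioc_of_le ht0]
    apply MeasureTheory.Integrable.mono'
        ((intervalIntegrable_iff_integrableOn_Ioc_of_le ht0).mp hBint)
    · exact ((((measurable_const.sub (measurable_id.const_mul b)).pow_const
        _).mul hgm).aestronglyMeasurable).restrict
    · filter_upwards [MeasureTheory.ae_restrict_mem measurableSet_Ioc] with s hs
      have hs' : s ∈ Set.Icc (0:ℝ) t := ⟨hs.1.le, hs.2⟩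
      have hnn : 0 ≤ (1-b*s) ^ (-(4-(N:ℝ)*α)/2 - σ) * g s :=
        mul_nonneg (Real.rpow_nonneg (hr s hs').le _)
          (hg0 s hs'.1 (lt_of_le_of_lt hs'.2 htT))
      rw [Real.norm_of_nonneg hnn]
      exact hkey s hs'
  -- FTC for the bound integral
  have hFTC : ∫ s in (0:ℝ)..t, (1-b*s)^(-1-σ) = ((1-b*t)^(-σ) - 1)/(b*σ) := by
    have hderiv : ∀ s ∈ Set.uIcc (0:ℝ) t,
        HasDerivAt (fun u : ℝ => (1-b*u)^(-σ)/(b*σ)) ((1-b*s)^(-1-σ)) s := by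
      intro s hs
      rw [Set.uIcc_of_le ht0] at hs
      have hrs := hr s hs
      have h1 : HasDerivAt (fun u : ℝ => 1 - b*u) (-b) s := by
        simpa using ((hasDerivAt_id s).const_mul b).const_sub (1:ℝ)
      have h2 := (h1.rpow_const (p := -σ) (Or.inl hrs.ne')).div_const (b*σ)
      refine h2.congr_deriv ?_
      rw [show -σ - 1 = -1 - σ by ring]
      field_simp
    have hint : IntervalIntegrable (fun s : ℝ => (1-b*s)^(-1-σ)) volume 0 t := by
      apply ContinuousOn.intervalIntegrable_of_Icc ht0
      apply ContinuousOn.rpow_const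
      · exact (continuousOn_const.sub ((continuous_const.mul continuous_id).continuousOn))
      · intro s hs; exact Or.inl (hr s hs).ne'
    rw [intervalIntegral.integral_eq_sub_of_hasDerivAt hderiv hint]
    have : (1 - b*0 : ℝ) = 1 := by ring
    rw [this, Real.one_rpow]
    ring
  have hle := intervalIntegral.integral_mono_on ht0 hfint hBint hkey
  rw [intervalIntegral.integral_const_mul, hFTC] at hle
  refine hle.trans ?_
  have hX : 0 < (1-b*t)^(-σ) := Real.rpow_pos_of_pos hrt _
  have hbσ : 0 < b*σ := by positivity
  have hconst : 2*(4*K)^α/(b*σ) + (2-(N:ℝ)*α)/(σ*α*M) = C₀/(b*σ) := by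
    rw [hC₀, hcdef]
    field_simp
  rw [hconst]
  rw [show C₀ * (((1-b*t)^(-σ) - 1)/(b*σ)) = C₀ * ((1-b*t)^(-σ) - 1) / (b*σ) by ring,
      show C₀/(b*σ) * (1-b*t)^(-σ) = C₀ * (1-b*t)^(-σ) / (b*σ) by ring]
  apply div_le_div_of_nonneg_right _ hbσ.le
  nlinarith
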